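/- The element w of W is nontrivial and is contained in every subgroup of finite index of W; in particular, W is not residually finite. -/

import Mathlib

/- Generators: `Gen.a i` is the generator a(i+1), `Gen.b i` is b(i+1) of the paper. -/
inductive Gen : Type
  | a : Fin 4 → Gen
  | b : Fin 3 → Gen

/-- The letter aᵢ₊₁ viewed in the free group. -/
def ga (i : Fin 4) : FreeGroup Gen := FreeGroup.of (Gen.a i)

/-- The letter bᵢ₊₁ viewed in the free group. -/
def gb (i : Fin 3) : FreeGroup Gen := FreeGroup.of (Gen.b i)

/-- The 12 relators. -/
def rels : Set (FreeGroup Gen) :=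
  { ga 0 * gb 0 * (ga 1)⁻¹ * (gb 1)⁻¹,
    ga 0 * gb 1 * (ga 0)⁻¹ * (gb 0)⁻¹,
    ga 0 * gb 2 * (ga 1)⁻¹ * (gb 2)⁻¹,
    ga 0 * (gb 2)⁻¹ * (ga 1)⁻¹ * gb 1,
    ga 0 * (gb 0)⁻¹ * (ga 1)⁻¹ * gb 2,
    ga 1 * gb 1 * (ga 1)⁻¹ * (gb 0)⁻¹,
    ga 2 * gb 0 * (ga 3)⁻¹ * (gb 1)⁻¹,
    ga 2 * gb 1 * (ga 2)⁻¹ * (gb 0)⁻¹,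
    ga 2 * gb 2 * (ga 3)⁻¹ * (gb 2)⁻¹,
    ga 2 * (gb 2)⁻¹ * (ga 3)⁻¹ * gb 1,
    ga 2 * (gb 0)⁻¹ * (ga 3)⁻¹ * gb 2,
    ga 3 * gb 1 * (ga 3)⁻¹ * (gb 0)⁻¹ }

/-- The presented group. -/
abbrev G : Type := PresentedGroup rels

/-- The image of the generator aᵢ₊₁ in the presented group. -/
def γa (i : Fin 4) : G := PresentedGroup.of (Gen.a i)

/-- The image of the generator bᵢ₊₁ in the presented group. -/
def γb (i : Fin 3) : G := PresentedGroup.of (Gen.b i)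

/-- The element w = a₂·a₁⁻¹·a₃·a₄⁻¹. -/
def w : G := γa 1 * (γa 0)⁻¹ * γa 2 * (γa 3)⁻¹

/-! ### Auxiliary development -/

namespace WiseAux

/-! #### Part A : an action of `G` on the free group on four letters, showing `w ≠ 1`. -/

abbrev BD := Fin 3 × Bool
abbrev AL := Fin 4 × Bool

/-- Negation of a b-direction. -/
def nb (s : BD) : BD := (s.1, !s.2)

/-- The "push a b-edge through an a-edge" rule coming from the 12 squares. -/
def stepA (s : BD) (x : AL) : AL × BD :=
  match s.2, s.1.val, x.2, x.1.val with
  | false, 0, false, 0 => ((1, false), (1, false))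
  | false, 0, false, 1 => ((0, false), (2, false))
  | false, 0, false, 2 => ((3, false), (1, false))
  | false, 0, false, 3 => ((2, false), (2, false))
  | false, 0, true, 0 => ((0, true), (1, false))
  | false, 0, true, 1 => ((1, true), (1, false))
  | false, 0, true, 2 => ((2, true), (1, false))
  | false, 0, true, 3 => ((3, true), (1, false))
  | false, 1, false, 0 => ((0, false), (0, false))
  | false, 1, false, 1 => ((1, false), (0, false))
  | false, 1, false, 2 => ((2, false), (0, false))
  | false, 1, false, 3 => ((3, false), (0, false))
  | false, 1, true, 0 => ((1, true), (0, false))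
  | false, 1, true, 1 => ((0, true), (2, false))
  | false, 1, true, 2 => ((3, true), (0, false))
  | false, 1, true, 3 => ((2, true), (2, false))
  | false, 2, false, 0 => ((1, false), (2, false))
  | false, 2, false, 1 => ((0, false), (1, false))
  | false, 2, false, 2 => ((3, false), (2, false))
  | false, 2, false, 3 => ((2, false), (1, false))
  | false, 2, true, 0 => ((1, true), (2, false))
  | false, 2, true, 1 => ((0, true), (0, false))
  | false, 2, true, 2 => ((3, true), (2, false))
  | false, 2, true, 3 => ((2, true), (0, false))
  | true, 0, false, 0 => ((1, false), (2, true))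
  | true, 0, false, 1 => ((0, false), (1, true))
  | true, 0, false, 2 => ((3, false), (2, true))
  | true, 0, false, 3 => ((2, false), (1, true))
  | true, 0, true, 0 => ((0, true), (1, true))
  | true, 0, true, 1 => ((1, true), (1, true))
  | true, 0, true, 2 => ((2, true), (1, true))
  | true, 0, true, 3 => ((3, true), (1, true))
  | true, 1, false, 0 => ((0, false), (0, true))
  | true, 1, false, 1 => ((1, false), (0, true))
  | true, 1, false, 2 => ((2, false), (0, true))
  | true, 1, false, 3 => ((3, false), (0, true))
  | true, 1, true, 0 => ((1, true), (2, true))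
  | true, 1, true, 1 => ((0, true), (0, true))
  | true, 1, true, 2 => ((3, true), (2, true))
  | true, 1, true, 3 => ((2, true), (0, true))
  | true, 2, false, 0 => ((1, false), (1, true))
  | true, 2, false, 1 => ((0, false), (2, true))
  | true, 2, false, 2 => ((3, false), (1, true))
  | true, 2, false, 3 => ((2, false), (2, true))
  | true, 2, true, 0 => ((1, true), (0, true))
  | true, 2, true, 1 => ((0, true), (2, true))
  | true, 2, true, 2 => ((3, true), (0, true))
  | _, _, _, _ => ((2, true), (2, true))

/-- Push a b-direction through a whole word (letter-output part). -/
def FA : BD → List AL → List AL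
  | _, [] => []
  | s, x :: L => (stepA s x).1 :: FA (stepA s x).2 L

/-- Push a b-direction through a whole word (final-state part). -/
def stA : BD → List AL → BD
  | s, [] => s
  | s, x :: L => stA (stepA s x).2 L

lemma stepA_cancel : ∀ (s : BD) (i : Fin 4) (b : Bool),
    stepA (stepA s (i, b)).2 (i, !b) = (((stepA s (i, b)).1.1, !(stepA s (i, b)).1.2), s) := by
  decide

lemma stepA_inv : ∀ (s : BD) (x : AL),
    stepA (nb s) (stepA s x).1 = (x, nb (stepA s x).2) := by decide

lemma nb_nb (s : BD) : nb (nb s) = s := by simp [nb]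

lemma FA_append (L1 L2 : List AL) : ∀ s, FA s (L1 ++ L2) = FA s L1 ++ FA (stA s L1) L2 := by
  induction L1 with
  | nil => intro s; rfl
  | cons x L ih => intro s; simp [FA, stA, ih]

lemma FA_FA (L : List AL) : ∀ s, FA (nb s) (FA s L) = L := by
  induction L with
  | nil => intro s; rfl
  | cons x L ih =>
    intro s
    show (stepA (nb s) (stepA s x).1).1 ::
        FA (stepA (nb s) (stepA s x).1).2 (FA (stepA s x).2 L) = x :: L
    rw [stepA_inv]
    simp [ih]

lemma FA_red (s : BD) : ∀ {L1 L2 : List AL}, FreeGroup.Red.Step L1 L2 →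
    FreeGroup.Red.Step (FA s L1) (FA s L2) := by
  intro L1 L2 h
  cases h with
  | @not L₁ L₂ x b =>
    rw [FA_append, FA_append]
    have hc := stepA_cancel (stA s L₁) x b
    have hunfold : FA (stA s L₁) ((x, b) :: (x, !b) :: L₂)
        = (stepA (stA s L₁) (x, b)).1 ::
          ((stepA (stA s L₁) (x, b)).1.1, !(stepA (stA s L₁) (x, b)).1.2) ::
          FA (stA s L₁) L₂ := by
      show (stepA (stA s L₁) (x, b)).1 ::
          (stepA (stepA (stA s L₁) (x, b)).2 (x, !b)).1 ::
          FA (stepA (stepA (stA s L₁) (x, b)).2 (x, !b)).2 L₂ = _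
      rw [hc]
    rw [hunfold]
    exact FreeGroup.Red.Step.not

/-- The induced map on the free group on four letters. -/
def fA (s : BD) : FreeGroup (Fin 4) → FreeGroup (Fin 4) :=
  Quot.map (FA s) (fun _ _ h => FA_red s h)

/-- The push-through map as a permutation. -/
def pA (s : BD) : Equiv.Perm (FreeGroup (Fin 4)) where
  toFun := fA s
  invFun := fA (nb s)
  left_inv := fun g => by
    obtain ⟨L⟩ := g
    exact congrArg (Quot.mk _) (FA_FA L s)
  right_inv := fun g => by
    obtain ⟨L⟩ := g
    have h := FA_FA L (nb s)
    rw [nb_nb] at h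
    exact congrArg (Quot.mk _) h

lemma pA_inv (s : BD) : (pA s)⁻¹ = pA (nb s) :=
  Equiv.ext fun _ => rfl

lemma relKey (β δ : BD) (α γ : Fin 4) (h : stepA δ (γ, true) = ((α, true), β)) :
    Equiv.mulLeft (FreeGroup.of α) * pA β = pA δ * Equiv.mulLeft (FreeGroup.of γ) := by
  apply Equiv.ext
  intro g
  obtain ⟨L⟩ := g
  show FreeGroup.mk ((α, true) :: FA β L)
      = FreeGroup.mk ((stepA δ (γ, true)).1 :: FA (stepA δ (γ, true)).2 L)
  rw [h]

lemma relFin (β δ : BD) (α γ : Fin 4) (h : stepA δ (γ, true) = ((α, true), β)) :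
    Equiv.mulLeft (FreeGroup.of α) * pA β * (Equiv.mulLeft (FreeGroup.of γ))⁻¹ * (pA δ)⁻¹
      = 1 := by
  rw [relKey β δ α γ h]; group

lemma relFin' (p q : Fin 3) (α γ : Fin 4)
    (h : stepA (q, false) (γ, true) = ((α, true), (p, false))) :
    Equiv.mulLeft (FreeGroup.of α) * (pA (p, true))⁻¹ * (Equiv.mulLeft (FreeGroup.of γ))⁻¹ *
      pA (q, true) = 1 := by
  have e1 : (pA (p, true))⁻¹ = pA (p, false) := pA_inv (p, true)
  have e2 : pA (q, true) = (pA (q, false))⁻¹ := (pA_inv (q, false)).symm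
  rw [e1, e2]
  exact relFin (p, false) (q, false) α γ h

/-- The action of the generators. -/
def ρ : Gen → Equiv.Perm (FreeGroup (Fin 4))
  | Gen.a i => Equiv.mulLeft (FreeGroup.of i)
  | Gen.b j => pA (j, true)

lemma hrelsA : ∀ r ∈ rels, FreeGroup.lift ρ r = 1 := by
  intro r hr
  simp only [rels, Set.mem_insert_iff, Set.mem_singleton_iff] at hr
  rcases hr with rfl | rfl | rfl | rfl | rfl | rfl | rfl | rfl | rfl | rfl | rfl | rfl <;>
    simp only [map_mul, map_inv, ga, gb, FreeGroup.lift_apply_of, ρ]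
  · exact relFin (0, true) (1, true) 0 1 (by decide)
  · exact relFin (1, true) (0, true) 0 0 (by decide)
  · exact relFin (2, true) (2, true) 0 1 (by decide)
  · exact relFin' 2 1 0 1 (by decide)
  · exact relFin' 0 2 0 1 (by decide)
  · exact relFin (1, true) (0, true) 1 1 (by decide)
  · exact relFin (0, true) (1, true) 2 3 (by decide)
  · exact relFin (1, true) (0, true) 2 2 (by decide)
  · exact relFin (2, true) (2, true) 2 3 (by decide)
  · exact relFin' 2 1 2 3 (by decide)
  · exact relFin' 0 2 2 3 (by decide)
  · exact relFin (1, true) (0, true) 3 3 (by decide)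

/-- The homomorphism from `G` to the permutations of the free group on four letters. -/
noncomputable def φA : G →* Equiv.Perm (FreeGroup (Fin 4)) :=
  PresentedGroup.toGroup hrelsA

/-- Sign homomorphism used to certify nontriviality. -/
def ψf : Fin 4 → ℤˣ := fun i => if i = 2 then -1 else 1

lemma w_ne_one : w ≠ 1 := by
  intro hw
  have h2 : φA w = Equiv.mulLeft (FreeGroup.of 1) * (Equiv.mulLeft (FreeGroup.of 0))⁻¹ *
      Equiv.mulLeft (FreeGroup.of 2) * (Equiv.mulLeft (FreeGroup.of 3))⁻¹ := by
    simp only [w, γa, map_mul, map_inv, φA, PresentedGroup.toGroup.of, ρ]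
  rw [hw, map_one] at h2
  have h4 := congrArg (fun p : Equiv.Perm (FreeGroup (Fin 4)) => p 1) h2.symm
  simp only [Equiv.Perm.mul_apply, Equiv.Perm.one_apply, Equiv.Perm.inv_def,
    Equiv.mulLeft_symm, Equiv.coe_mulLeft, mul_one] at h4
  have h5 := congrArg (FreeGroup.lift ψf) h4
  simp only [map_mul, map_inv, map_one, FreeGroup.lift_apply_of, ψf] at h5
  revert h5; decide

/-! #### Part B : in every finite quotient `w` dies. -/

/-- The push-through automaton for the b-letters (`false` plays a₁, `true` plays a₂). -/
def stepB (s : Bool) (j : Fin 3) : Fin 3 × Bool :=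
  match s, j.val with
  | false, 0 => (1, true)
  | false, 1 => (0, false)
  | false, 2 => (2, true)
  | true, 0 => (2, false)
  | true, 1 => (0, true)
  | _, _ => (1, false)

/-- Push through a list of b-letters. -/
def PB : Bool → List (Fin 3) → List (Fin 3)
  | _, [] => []
  | s, j :: L => (stepB s j).1 :: PB (stepB s j).2 L

/-- Parity of the number of "swapping" letters (those ≠ 1). -/
def scB : List (Fin 3) → Bool
  | [] => false
  | j :: L => xor (j != 1) (scB L)

section GroupB

variable {Q : Type*} [Group Q]

/-- Evaluation of a word in the b-letters. -/
def eB (y : Fin 3 → Q) : List (Fin 3) → Q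
  | [] => 1
  | j :: L => y j * eB y L

lemma eB_append (y : Fin 3 → Q) (L1 L2 : List (Fin 3)) :
    eB y (L1 ++ L2) = eB y L1 * eB y L2 := by
  induction L1 with
  | nil => simp [eB]
  | cons j L ih => simp [eB, ih, mul_assoc]

lemma stepB_state : ∀ (s : Bool) (j : Fin 3), (stepB s j).2 = xor s (j != 1) := by decide

lemma stepB_state_not : ∀ (s : Bool) (j : Fin 3), (stepB (!s) j).2 = !(stepB s j).2 := by decide

lemma stepB_out_parity : ∀ (s : Bool) (j : Fin 3),
    xor ((stepB s j).1 != 1) ((stepB (!s) j).1 != 1) = (j != 1) := by decide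

lemma boolaux : ∀ a b c d : Bool, xor (xor a c) (xor b d) = xor (xor a b) (xor c d) := by decide

lemma scB_append (L1 L2 : List (Fin 3)) : scB (L1 ++ L2) = xor (scB L1) (scB L2) := by
  induction L1 with
  | nil => simp [scB]
  | cons j L ih => simp [scB, ih, Bool.xor_assoc]

lemma parB : ∀ (L : List (Fin 3)) (s : Bool),
    xor (scB (PB s L)) (scB (PB (!s) L)) = scB L := by
  intro L
  induction L with
  | nil => intro s; rfl
  | cons j L ih =>
    intro s
    show xor (xor ((stepB s j).1 != 1) (scB (PB (stepB s j).2 L)))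
        (xor ((stepB (!s) j).1 != 1) (scB (PB (stepB (!s) j).2 L))) = xor (j != 1) (scB L)
    rw [stepB_state_not s j, boolaux, stepB_out_parity s j, ih (stepB s j).2]

lemma pushB (y : Fin 3 → Q) (x : Bool → Q)
    (hx : ∀ s j, x s * y j = y (stepB s j).1 * x (stepB s j).2) :
    ∀ (L : List (Fin 3)) (s : Bool),
      x s * eB y L = eB y (PB s L) * x (xor s (scB L)) := by
  intro L
  induction L with
  | nil => intro s; simp [eB, PB, scB]
  | cons j L ih =>
    intro s
    have hxor : xor (stepB s j).2 (scB L) = xor s (scB (j :: L)) := by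
      rw [stepB_state]
      show xor (xor s (j != 1)) (scB L) = xor s (xor (j != 1) (scB L))
      exact Bool.xor_assoc s (j != 1) (scB L)
    calc x s * eB y (j :: L) = (x s * y j) * eB y L := by
          show x s * (y j * eB y L) = _ ; group
      _ = y (stepB s j).1 * (x (stepB s j).2 * eB y L) := by rw [hx]; group
      _ = y (stepB s j).1 * (eB y (PB (stepB s j).2 L) * x (xor (stepB s j).2 (scB L))) := by
          rw [ih]
      _ = eB y (PB s (j :: L)) * x (xor s (scB (j :: L))) := by
          rw [hxor]
          show _ = y (stepB s j).1 * eB y (PB (stepB s j).2 L) * x (xor s (scB (j :: L)))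
          group

lemma descend (y : Fin 3 → Q) (x x' : Bool → Q)
    (hx : ∀ s j, x s * y j = y (stepB s j).1 * x (stepB s j).2)
    (hx' : ∀ s j, x' s * y j = y (stepB s j).1 * x' (stepB s j).2)
    (m : ℕ) : 0 < m → ∀ L : List (Fin 3), scB L = true → eB y L ^ m = 1 →
      x false * (x true)⁻¹ = x' false * (x' true)⁻¹ := by
  induction m using Nat.strong_induction_on with
  | _ m ih =>
  intro hm L hsc hpow
  have h1 : x false * eB y L = eB y (PB false L) * x true := by
    have h := pushB y x hx L false
    rw [hsc] at h
    simpa using h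
  have h2 : x true * eB y L = eB y (PB true L) * x false := by
    have h := pushB y x hx L true
    rw [hsc] at h
    simpa using h
  have h1' : x' false * eB y L = eB y (PB false L) * x' true := by
    have h := pushB y x' hx' L false
    rw [hsc] at h
    simpa using h
  have h2' : x' true * eB y L = eB y (PB true L) * x' false := by
    have h := pushB y x' hx' L true
    rw [hsc] at h
    simpa using h
  set u := eB y L with hu
  set v := eB y (PB false L) with hv
  set v' := eB y (PB true L) with hv'
  have hev : ∀ (z zz : Q), z * u = v * zz → zz * u = v' * z →
      ∀ t : ℕ, z * u ^ (2 * t) = (v * v') ^ t * z := by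
    intro z zz hz hzz t
    induction t with
    | zero => simp
    | succ t iht =>
      have e : 2 * (t + 1) = 2 * t + 1 + 1 := by ring
      rw [e, pow_succ, pow_succ, ← mul_assoc, ← mul_assoc, iht]
      calc (v * v') ^ t * z * u * u = (v * v') ^ t * (z * u) * u := by group
        _ = (v * v') ^ t * (v * zz) * u := by rw [hz]
        _ = ((v * v') ^ t * v) * (zz * u) := by group
        _ = ((v * v') ^ t * v) * (v' * z) := by rw [hzz]
        _ = (v * v') ^ (t + 1) * z := by rw [pow_succ]; group
  rcases Nat.even_or_odd m with he | ho
  · obtain ⟨t, ht⟩ := he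
    have hm2 : 2 * t = m := by omega
    have htpos : 0 < t := by omega
    have hvv : (v * v') ^ t = 1 := by
      have h := hev (x false) (x true) h1 h2 t
      rw [hm2, hpow, mul_one] at h
      exact right_eq_mul.mp h
    have hsc2 : scB (PB false L ++ PB true L) = true := by
      rw [scB_append]
      have hpar := parB L false
      simp only [Bool.not_false] at hpar
      rw [hpar, hsc]
    have hpow2 : eB y (PB false L ++ PB true L) ^ t = 1 := by
      rw [eB_append]; exact hvv
    exact ih t (by omega) htpos _ hsc2 hpow2
  · obtain ⟨t, ht⟩ := ho
    have key : ∀ (z zz : Q), z * u = v * zz → zz * u = v' * z →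
        z * zz⁻¹ = (v * v') ^ t * v := by
      intro z zz hz hzz
      have hzm : z * u ^ m = (v * v') ^ t * v * zz := by
        rw [ht, pow_succ, ← mul_assoc, hev z zz hz hzz t, mul_assoc, hz, ← mul_assoc]
      rw [hpow, mul_one] at hzm
      rw [hzm]; group
    rw [key _ _ h1 h2, key _ _ h1' h2']

end GroupB

/-! #### The relations, in `G`. -/

lemma relG {r : FreeGroup Gen} (hr : r ∈ rels) : PresentedGroup.mk rels r = 1 :=
  (QuotientGroup.eq_one_iff r).mpr (Subgroup.subset_normalClosure hr)

lemma gr1 : γa 0 * γb 0 * (γa 1)⁻¹ * (γb 1)⁻¹ = 1 := by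
  have h := relG (show ga 0 * gb 0 * (ga 1)⁻¹ * (gb 1)⁻¹ ∈ rels by simp [rels])
  simp only [map_mul, map_inv] at h
  exact h

lemma gr2 : γa 0 * γb 1 * (γa 0)⁻¹ * (γb 0)⁻¹ = 1 := by
  have h := relG (show ga 0 * gb 1 * (ga 0)⁻¹ * (gb 0)⁻¹ ∈ rels by simp [rels])
  simp only [map_mul, map_inv] at h
  exact h

lemma gr3 : γa 0 * γb 2 * (γa 1)⁻¹ * (γb 2)⁻¹ = 1 := by
  have h := relG (show ga 0 * gb 2 * (ga 1)⁻¹ * (gb 2)⁻¹ ∈ rels by simp [rels])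
  simp only [map_mul, map_inv] at h
  exact h

lemma gr4 : γa 0 * (γb 2)⁻¹ * (γa 1)⁻¹ * γb 1 = 1 := by
  have h := relG (show ga 0 * (gb 2)⁻¹ * (ga 1)⁻¹ * gb 1 ∈ rels by simp [rels])
  simp only [map_mul, map_inv] at h
  exact h

lemma gr5 : γa 0 * (γb 0)⁻¹ * (γa 1)⁻¹ * γb 2 = 1 := by
  have h := relG (show ga 0 * (gb 0)⁻¹ * (ga 1)⁻¹ * gb 2 ∈ rels by simp [rels])
  simp only [map_mul, map_inv] at h
  exact h

lemma gr6 : γa 1 * γb 1 * (γa 1)⁻¹ * (γb 0)⁻¹ = 1 := by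
  have h := relG (show ga 1 * gb 1 * (ga 1)⁻¹ * (gb 0)⁻¹ ∈ rels by simp [rels])
  simp only [map_mul, map_inv] at h
  exact h

lemma gr7 : γa 2 * γb 0 * (γa 3)⁻¹ * (γb 1)⁻¹ = 1 := by
  have h := relG (show ga 2 * gb 0 * (ga 3)⁻¹ * (gb 1)⁻¹ ∈ rels by simp [rels])
  simp only [map_mul, map_inv] at h
  exact h

lemma gr8 : γa 2 * γb 1 * (γa 2)⁻¹ * (γb 0)⁻¹ = 1 := by
  have h := relG (show ga 2 * gb 1 * (ga 2)⁻¹ * (gb 0)⁻¹ ∈ rels by simp [rels])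
  simp only [map_mul, map_inv] at h
  exact h

lemma gr9 : γa 2 * γb 2 * (γa 3)⁻¹ * (γb 2)⁻¹ = 1 := by
  have h := relG (show ga 2 * gb 2 * (ga 3)⁻¹ * (gb 2)⁻¹ ∈ rels by simp [rels])
  simp only [map_mul, map_inv] at h
  exact h

lemma gr10 : γa 2 * (γb 2)⁻¹ * (γa 3)⁻¹ * γb 1 = 1 := by
  have h := relG (show ga 2 * (gb 2)⁻¹ * (ga 3)⁻¹ * gb 1 ∈ rels by simp [rels])
  simp only [map_mul, map_inv] at h
  exact h

lemma gr11 : γa 2 * (γb 0)⁻¹ * (γa 3)⁻¹ * γb 2 = 1 := by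
  have h := relG (show ga 2 * (gb 0)⁻¹ * (ga 3)⁻¹ * gb 2 ∈ rels by simp [rels])
  simp only [map_mul, map_inv] at h
  exact h

lemma gr12 : γa 3 * γb 1 * (γa 3)⁻¹ * (γb 0)⁻¹ = 1 := by
  have h := relG (show ga 3 * gb 1 * (ga 3)⁻¹ * (gb 0)⁻¹ ∈ rels by simp [rels])
  simp only [map_mul, map_inv] at h
  exact h

section Rearr

variable {Q : Type*} [Group Q]

lemma rearr1 {a b c d : Q} (h : a * b * c⁻¹ * d⁻¹ = 1) : a * b = d * c := by
  rw [mul_inv_eq_one] at h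
  rw [mul_inv_eq_iff_eq_mul] at h
  exact h

lemma rearr2 {a b c d : Q} (h : a * b⁻¹ * c⁻¹ * d = 1) : c * b = d * a := by
  have h1 : a * b⁻¹ * c⁻¹ = d⁻¹ := eq_inv_of_mul_eq_one_left h
  have h2 : c * b * a⁻¹ = d := by
    have h3 := congrArg (fun z : Q => z⁻¹) h1
    simp only [mul_inv_rev, inv_inv] at h3
    rw [← h3]; group
  rw [← h2]; group

end Rearr

/-- In every finite quotient, `w` maps to 1. -/
lemma w_in_finite_index (H : Subgroup G) (hH : H.FiniteIndex) : w ∈ H := by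
  haveI := hH
  haveI : H.normalCore.Normal := H.normalCore_normal
  haveI : H.normalCore.FiniteIndex := Subgroup.finiteIndex_normalCore H
  haveI : Finite (G ⧸ H.normalCore) := Subgroup.finite_quotient_of_finiteIndex
  set φ := QuotientGroup.mk' H.normalCore with hφdef
  have hq1 := congrArg φ gr1; simp only [map_mul, map_inv, map_one] at hq1
  have hq2 := congrArg φ gr2; simp only [map_mul, map_inv, map_one] at hq2
  have hq3 := congrArg φ gr3; simp only [map_mul, map_inv, map_one] at hq3
  have hq4 := congrArg φ gr4; simp only [map_mul, map_inv, map_one] at hq4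
  have hq5 := congrArg φ gr5; simp only [map_mul, map_inv, map_one] at hq5
  have hq6 := congrArg φ gr6; simp only [map_mul, map_inv, map_one] at hq6
  have hq7 := congrArg φ gr7; simp only [map_mul, map_inv, map_one] at hq7
  have hq8 := congrArg φ gr8; simp only [map_mul, map_inv, map_one] at hq8
  have hq9 := congrArg φ gr9; simp only [map_mul, map_inv, map_one] at hq9
  have hq10 := congrArg φ gr10; simp only [map_mul, map_inv, map_one] at hq10
  have hq11 := congrArg φ gr11; simp only [map_mul, map_inv, map_one] at hq11
  have hq12 := congrArg φ gr12; simp only [map_mul, map_inv, map_one] at hq12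
  have hx : ∀ (s : Bool) (j : Fin 3),
      (fun s => φ (γa (cond s 1 0))) s * (fun j => φ (γb j)) j
        = (fun j => φ (γb j)) (stepB s j).1 *
          (fun s => φ (γa (cond s 1 0))) (stepB s j).2 := by
    intro s j
    cases s <;> fin_cases j
    · exact rearr1 hq1
    · exact rearr1 hq2
    · exact rearr1 hq3
    · exact rearr2 hq5
    · exact rearr1 hq6
    · exact rearr2 hq4
  have hx' : ∀ (s : Bool) (j : Fin 3),
      (fun s => φ (γa (cond s 3 2))) s * (fun j => φ (γb j)) j
        = (fun j => φ (γb j)) (stepB s j).1 *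
          (fun s => φ (γa (cond s 3 2))) (stepB s j).2 := by
    intro s j
    cases s <;> fin_cases j
    · exact rearr1 hq7
    · exact rearr1 hq8
    · exact rearr1 hq9
    · exact rearr2 hq11
    · exact rearr1 hq12
    · exact rearr2 hq10
  have hd := descend (fun j => φ (γb j)) (fun s => φ (γa (cond s 1 0)))
      (fun s => φ (γa (cond s 3 2))) hx hx' (Nat.card (G ⧸ H.normalCore))
      Nat.card_pos [0] (by decide)
      (by
        show (φ (γb 0) * 1) ^ Nat.card (G ⧸ H.normalCore) = 1
        rw [mul_one]
        exact pow_card_eq_one')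
  have hd' : φ (γa 0) * (φ (γa 1))⁻¹ = φ (γa 2) * (φ (γa 3))⁻¹ := hd
  have hφw : φ w = 1 := by
    show φ (γa 1 * (γa 0)⁻¹ * γa 2 * (γa 3)⁻¹) = 1
    simp only [map_mul, map_inv]
    rw [mul_assoc (φ (γa 1) * (φ (γa 0))⁻¹), ← hd']
    group
  exact H.normalCore_le ((QuotientGroup.eq_one_iff w).mp hφw)

end WiseAux

/-- w is nontrivial, lies in every finite-index subgroup; hence the group is
not residually finite. -/
theorem w_in_every_finite_index_subgroup :
    w ≠ 1 ∧ (∀ H : Subgroup G, H.FiniteIndex → w ∈ H) ∧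
      ¬ (∀ g : G, g ≠ 1 → ∃ N : Subgroup G, N.Normal ∧ N.FiniteIndex ∧ g ∉ N) := by
  refine ⟨WiseAux.w_ne_one, WiseAux.w_in_finite_index, ?_⟩
  intro hres
  obtain ⟨N, _, hfi, hw⟩ := hres w WiseAux.w_ne_one
  exact hw (WiseAux.w_in_finite_index N hfi)
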